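/- (Bivariate normal: joint tail decay rate in the interior regime.) Let Z₁, Z₂ be independent standard normal random variables, let ρ ∈ (−1,1), and set X = Z₁ and Y = ρZ₁ + (1−ρ²)^{1/2} Z₂. Let β, γ > 0 and let x_β(n), x_γ(n) satisfy Φ(x_β(n)) = 1 − n^{−β} and Φ(x_γ(n)) = 1 − n^{−γ}. If either ρ ≤ 0, or ρ > 0 and ρ² < min{β/γ, γ/β}, then −log P(X > x_β(n), Y > x_γ(n)) / log n → (β + γ − 2ρ(βγ)^{1/2}) / (1 − ρ²) as n → ∞. -/

import Mathlib

open MeasureTheory Filter ProbabilityTheory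

/-- The standard normal cumulative distribution function. -/
noncomputable def stdNormalCDF (x : ℝ) : ℝ :=
  ∫ u in Set.Iic x, (Real.sqrt (2 * Real.pi))⁻¹ * Real.exp (-u ^ 2 / 2)


open MeasureTheory Filter ProbabilityTheory Set Real
open scoped ENNReal NNReal

namespace BNaux

noncomputable def pdf (x : ℝ) : ℝ := (Real.sqrt (2 * Real.pi))⁻¹ * Real.exp (-x ^ 2 / 2)

lemma pdf_nonneg (x : ℝ) : 0 ≤ pdf x := by
  unfold pdf; positivity

lemma pdf_pos (x : ℝ) : 0 < pdf x := by
  unfold pdf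
  have : (0:ℝ) < Real.sqrt (2 * Real.pi) := Real.sqrt_pos.2 (by positivity)
  positivity

lemma measurable_pdf : Measurable pdf :=
  ((((measurable_id.pow_const 2).neg).div_const 2).exp).const_mul _

lemma integrable_pdf : Integrable pdf := by
  have h : pdf = fun x => (Real.sqrt (2 * Real.pi))⁻¹ * Real.exp (-(1/2) * x ^ 2) := by
    funext x; unfold pdf; congr 1; ring_nf
  rw [h]
  exact (integrable_exp_neg_mul_sq (by norm_num)).const_mul _

lemma integral_pdf : ∫ x, pdf x = 1 := by
  unfold pdf
  have h : ∀ x : ℝ, Real.exp (-x ^ 2 / 2) = Real.exp (-(1/2) * x ^ 2) := by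
    intro x; congr 1; ring
  simp_rw [h, integral_const_mul, integral_gaussian]
  rw [show Real.pi / (1/2) = 2 * Real.pi by ring]
  rw [inv_mul_cancel₀]
  exact (Real.sqrt_pos.2 (by positivity)).ne'

lemma cdf_mono : Monotone stdNormalCDF := by
  intro x y hxy
  refine setIntegral_mono_set (integrable_pdf.integrableOn)
    (ae_of_all _ fun u => pdf_nonneg u) (ae_of_all _ (Iic_subset_Iic.2 hxy))

lemma one_sub_cdf (x : ℝ) : 1 - stdNormalCDF x = ∫ u in Set.Ioi x, pdf u := by
  have := intervalIntegral.integral_Iic_add_Ioi (b := x) integrable_pdf.integrableOn integrable_pdf.integrableOn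
  unfold stdNormalCDF
  have h1 : (∫ u in Set.Iic x, (Real.sqrt (2 * Real.pi))⁻¹ * Real.exp (-u ^ 2 / 2))
      = ∫ u in Set.Iic x, pdf u := rfl
  rw [h1]
  rw [integral_pdf] at this  -- `this : ∫ Iic + ∫ Ioi = ∫ = 1`?
  linarith [this]

lemma cdf_diff {x y : ℝ} (hxy : x ≤ y) :
    stdNormalCDF y - stdNormalCDF x = ∫ u in Set.Ioc x y, pdf u := by
  have h := intervalIntegral.integral_Iic_sub_Iic (a := x) (b := y)
    (integrable_pdf.integrableOn) (integrable_pdf.integrableOn)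
  rw [intervalIntegral.integral_of_le hxy] at h
  exact h

end BNaux

namespace BNaux

lemma sqrt_two_pi_ge_one : (1:ℝ) ≤ Real.sqrt (2 * Real.pi) := by
  rw [show (1:ℝ) = Real.sqrt 1 by simp]
  exact Real.sqrt_le_sqrt (by nlinarith [Real.pi_gt_three])

lemma tail_le {x : ℝ} (hx : 1 ≤ x) : ∫ u in Set.Ioi x, pdf u ≤ Real.exp (-x ^ 2 / 2) := by
  have hmono : ∀ u ∈ Set.Ioi x, pdf u ≤ Real.exp (-x ^ 2 / 2 + x) * Real.exp (-1 * u) := by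
    intro u hu
    have hu' : x < u := hu
    have h1 : pdf u ≤ Real.exp (-u ^ 2 / 2) := by
      unfold pdf
      have := sqrt_two_pi_ge_one
      nlinarith [Real.exp_pos (-u ^ 2 / 2), inv_le_one_of_one_le₀ this,
        (inv_pos.2 (lt_of_lt_of_le one_pos this)).le]
    have h2 : Real.exp (-u ^ 2 / 2) ≤ Real.exp (-x ^ 2 / 2 + x) * Real.exp (-1 * u) := by
      rw [← Real.exp_add]
      apply Real.exp_le_exp.2
      nlinarith [(u - x) * (u + x - 2)]
    linarith
  calc ∫ u in Set.Ioi x, pdf u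
      ≤ ∫ u in Set.Ioi x, Real.exp (-x ^ 2 / 2 + x) * Real.exp (-1 * u) := by
        refine setIntegral_mono_on integrable_pdf.integrableOn ?_ measurableSet_Ioi hmono
        exact ((exp_neg_integrableOn_Ioi x one_pos).const_mul _)
    _ = Real.exp (-x ^ 2 / 2 + x) * ∫ u in Set.Ioi x, Real.exp (-1 * u) := by
        rw [integral_const_mul]
    _ = Real.exp (-x ^ 2 / 2) := by
        simp only [neg_one_mul]
        rw [integral_exp_neg_Ioi, ← Real.exp_add]
        ring_nf

lemma box_ge (x : ℝ) :
    (Real.sqrt (2 * Real.pi))⁻¹ * Real.exp (-(|x| + 1) ^ 2 / 2)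
      ≤ ∫ u in Set.Ioc x (x + 1), pdf u := by
  have hpt : ∀ u ∈ Set.Ioc x (x + 1),
      (Real.sqrt (2 * Real.pi))⁻¹ * Real.exp (-(|x| + 1) ^ 2 / 2) ≤ pdf u := by
    intro u hu
    unfold pdf
    have h1 : u ^ 2 ≤ (|x| + 1) ^ 2 := by
      have := abs_le.1 (le_refl |x|)
      have h2 : -(|x| + 1) ≤ u := by
        have := neg_abs_le x
        nlinarith [hu.1]
      have h3 : u ≤ |x| + 1 := by
        have := le_abs_self x
        nlinarith [hu.2]
      nlinarith
    have := Real.exp_le_exp.2 (show -(|x| + 1) ^ 2 / 2 ≤ -u ^ 2 / 2 by linarith)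
    have hs : (0:ℝ) ≤ (Real.sqrt (2 * Real.pi))⁻¹ := by positivity
    nlinarith
  have h := setIntegral_ge_of_const_le (μ := volume) measurableSet_Ioc
    (by simp [Real.volume_Ioc]) hpt integrable_pdf.integrableOn
  have hv : (volume (Set.Ioc x (x + 1))).toReal = 1 := by
    simp [Real.volume_Ioc]
  rw [measureReal_def, hv, one_smul] at h
  exact h

lemma tail_ge (x : ℝ) :
    (Real.sqrt (2 * Real.pi))⁻¹ * Real.exp (-(|x| + 1) ^ 2 / 2) ≤ ∫ u in Set.Ioi x, pdf u := by
  refine (box_ge x).trans ?_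
  refine setIntegral_mono_set integrable_pdf.integrableOn
    (ae_of_all _ fun u => pdf_nonneg u) (ae_of_all _ ?_)
  exact Set.Ioc_subset_Ioi_self

lemma one_sub_cdf_le {x : ℝ} (hx : 1 ≤ x) : 1 - stdNormalCDF x ≤ Real.exp (-x ^ 2 / 2) := by
  rw [one_sub_cdf]; exact tail_le hx

lemma one_sub_cdf_ge (x : ℝ) :
    (Real.sqrt (2 * Real.pi))⁻¹ * Real.exp (-(|x| + 1) ^ 2 / 2) ≤ 1 - stdNormalCDF x := by
  rw [one_sub_cdf]; exact tail_ge x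

lemma cdf_gap_ge (x : ℝ) :
    (Real.sqrt (2 * Real.pi))⁻¹ * Real.exp (-(|x| + 1) ^ 2 / 2)
      ≤ stdNormalCDF (x + 1) - stdNormalCDF x := by
  rw [cdf_diff (by linarith)]; exact box_ge x

lemma cdf_lt_one (x : ℝ) : stdNormalCDF x < 1 := by
  have h := one_sub_cdf_ge x
  have : (0:ℝ) < (Real.sqrt (2 * Real.pi))⁻¹ * Real.exp (-(|x| + 1) ^ 2 / 2) := by positivity
  linarith

/-- If `1 - Φ(a n) → 0` then `a n → ∞`. -/
lemma tendsto_atTop_of_one_sub_cdf {a : ℕ → ℝ}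
    (h : Tendsto (fun n => 1 - stdNormalCDF (a n)) atTop (nhds 0)) :
    Tendsto a atTop atTop := by
  rw [tendsto_atTop]
  intro M
  have hpos : 0 < 1 - stdNormalCDF M := by
    have h1 := one_sub_cdf_ge M
    have : (0:ℝ) < (Real.sqrt (2 * Real.pi))⁻¹ * Real.exp (-(|M| + 1) ^ 2 / 2) := by positivity
    linarith
  filter_upwards [(tendsto_order.1 h).2 _ hpos] with n hn
  by_contra hM
  push_neg at hM
  have := cdf_mono hM.le
  linarith

end BNaux

namespace BNaux

/-- The standard normal measure on ℝ. -/
noncomputable def snm : Measure ℝ := volume.withDensity (fun x => ENNReal.ofReal (pdf x))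

lemma snm_apply {s : Set ℝ} (hs : MeasurableSet s) :
    snm s = ENNReal.ofReal (∫ u in s, pdf u) := by
  rw [snm, withDensity_apply _ hs,
    ofReal_integral_eq_lintegral_ofReal integrable_pdf.integrableOn
      (ae_of_all _ fun u => pdf_nonneg u)]

instance : IsProbabilityMeasure snm := by
  constructor
  rw [snm_apply MeasurableSet.univ]
  simp only [Measure.restrict_univ]
  rw [integral_pdf]
  simp

lemma snm_Iic (x : ℝ) : snm (Set.Iic x) = ENNReal.ofReal (stdNormalCDF x) := by
  rw [snm_apply measurableSet_Iic]; rfl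

variable {Ω : Type*} [MeasurableSpace Ω] (μ : Measure Ω) [IsProbabilityMeasure μ]

lemma map_eq_snm {Z : Ω → ℝ} (hm : Measurable Z)
    (hZ : ∀ x : ℝ, (μ {a | Z a ≤ x}).toReal = stdNormalCDF x) :
    Measure.map Z μ = snm := by
  have : IsProbabilityMeasure (Measure.map Z μ) := Measure.isProbabilityMeasure_map hm.aemeasurable
  refine MeasureTheory.Measure.ext_of_Iic _ _ (fun x => ?_)
  rw [Measure.map_apply hm measurableSet_Iic, snm_Iic, ← hZ x,
    ENNReal.ofReal_toReal (measure_ne_top _ _)]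
  rfl

lemma pdf_mul_exp (u x : ℝ) :
    pdf x * Real.exp (u * x) = Real.exp (u ^ 2 / 2) * pdf (x - u) := by
  unfold pdf
  rw [mul_assoc, ← Real.exp_add, show (Real.exp (u ^ 2 / 2) *
    ((Real.sqrt (2 * Real.pi))⁻¹ * Real.exp (-(x - u) ^ 2 / 2))) =
    (Real.sqrt (2 * Real.pi))⁻¹ * (Real.exp (u ^ 2 / 2) * Real.exp (-(x - u) ^ 2 / 2)) by ring,
    ← Real.exp_add]
  congr 1
  ring

lemma integrable_pdf_mul_exp (u : ℝ) :
    Integrable (fun x => pdf x * Real.exp (u * x)) := by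
  simp_rw [pdf_mul_exp]
  exact (integrable_pdf.comp_sub_right u).const_mul _

lemma snm_eq_withDensity_nnreal :
    snm = volume.withDensity (fun x => ((fun y => (pdf y).toNNReal) x : ℝ≥0∞)) := rfl

lemma integrable_exp_mul_snm (u : ℝ) :
    Integrable (fun x => Real.exp (u * x)) snm := by
  rw [snm_eq_withDensity_nnreal]
  rw [integrable_withDensity_iff_integrable_smul measurable_pdf.real_toNNReal]
  have : (fun x => (pdf x).toNNReal • Real.exp (u * x))
      = fun x => pdf x * Real.exp (u * x) := by
    funext x
    simp [NNReal.smul_def, Real.coe_toNNReal _ (pdf_nonneg x)]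
  rw [this]
  exact integrable_pdf_mul_exp u

lemma integral_exp_mul_snm (u : ℝ) :
    ∫ x, Real.exp (u * x) ∂snm = Real.exp (u ^ 2 / 2) := by
  rw [snm_eq_withDensity_nnreal,
    integral_withDensity_eq_integral_smul measurable_pdf.real_toNNReal]
  have : (fun x => (pdf x).toNNReal • Real.exp (u * x))
      = fun x => Real.exp (u ^ 2 / 2) * pdf (x - u) := by
    funext x
    rw [NNReal.smul_def, Real.coe_toNNReal _ (pdf_nonneg x), smul_eq_mul, pdf_mul_exp]
  rw [this, integral_const_mul, integral_sub_right_eq_self pdf u, integral_pdf, mul_one]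

lemma integrable_exp_mul {Z : Ω → ℝ} (hm : Measurable Z)
    (hZ : ∀ x : ℝ, (μ {a | Z a ≤ x}).toReal = stdNormalCDF x) (u : ℝ) :
    Integrable (fun ω => Real.exp (u * Z ω)) μ := by
  have hmap := map_eq_snm μ hm hZ
  have hg : Measurable (fun x : ℝ => Real.exp (u * x)) :=
    (measurable_id.const_mul u).exp
  have := (integrable_map_measure (μ := μ) (f := Z) (g := fun x => Real.exp (u * x))
    (hg.aestronglyMeasurable) hm.aemeasurable).1
  rw [hmap] at this
  exact this (integrable_exp_mul_snm u)

lemma integral_exp_mul {Z : Ω → ℝ} (hm : Measurable Z)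
    (hZ : ∀ x : ℝ, (μ {a | Z a ≤ x}).toReal = stdNormalCDF x) (u : ℝ) :
    ∫ ω, Real.exp (u * Z ω) ∂μ = Real.exp (u ^ 2 / 2) := by
  have hmap := map_eq_snm μ hm hZ
  have hg : Measurable (fun x : ℝ => Real.exp (u * x)) :=
    (measurable_id.const_mul u).exp
  have h := MeasureTheory.integral_map (μ := μ) (φ := Z) (f := fun x => Real.exp (u * x))
    hm.aemeasurable hg.aestronglyMeasurable
  rw [hmap, integral_exp_mul_snm] at h
  exact h.symm

end BNaux

namespace BNaux

variable {Ω : Type*} [MeasurableSpace Ω] {μ : Measure Ω} [IsProbabilityMeasure μ]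
variable {Z₁ Z₂ : Ω → ℝ}

lemma chernoff (hm₁ : Measurable Z₁) (hm₂ : Measurable Z₂)
    (hind : IndepFun Z₁ Z₂ μ)
    (hZ₁ : ∀ x : ℝ, (μ {a | Z₁ a ≤ x}).toReal = stdNormalCDF x)
    (hZ₂ : ∀ x : ℝ, (μ {a | Z₂ a ≤ x}).toReal = stdNormalCDF x)
    {ρ : ℝ} (hρ1 : -1 < ρ) (hρ2 : ρ < 1) {a b : ℝ} (ha : ρ * b ≤ a) (hb : ρ * a ≤ b) :
    (μ {ω | Z₁ ω > a ∧ ρ * Z₁ ω + Real.sqrt (1 - ρ ^ 2) * Z₂ ω > b}).toReal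
      ≤ Real.exp (-((a ^ 2 + b ^ 2 - 2 * ρ * a * b) / (2 * (1 - ρ ^ 2)))) := by
  have hd : (0:ℝ) < 1 - ρ ^ 2 := by nlinarith
  have hr : (0:ℝ) < Real.sqrt (1 - ρ ^ 2) := Real.sqrt_pos.2 hd
  set s : ℝ := (a - ρ * b) / (1 - ρ ^ 2) with hs_def
  set t : ℝ := (b - ρ * a) / (1 - ρ ^ 2) with ht_def
  have hs : 0 ≤ s := div_nonneg (by linarith) hd.le
  have ht : 0 ≤ t := div_nonneg (by linarith) hd.le
  set u : ℝ := s + t * ρ with hu_def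
  set v : ℝ := t * Real.sqrt (1 - ρ ^ 2) with hv_def
  set X' : Ω → ℝ := fun ω => u * Z₁ ω with hX'_def
  set Y' : Ω → ℝ := fun ω => v * Z₂ ω with hY'_def
  have hindW : IndepFun X' Y' μ :=
    hind.comp (measurable_const_mul u) (measurable_const_mul v)
  have hIX : Integrable (fun ω => Real.exp (1 * X' ω)) μ := by
    simp only [hX'_def, one_mul]
    exact integrable_exp_mul μ hm₁ hZ₁ u
  have hIY : Integrable (fun ω => Real.exp (1 * Y' ω)) μ := by
    simp only [hY'_def, one_mul]
    exact integrable_exp_mul μ hm₂ hZ₂ v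
  have hIW : Integrable (fun ω => Real.exp (1 * (X' + Y') ω)) μ :=
    hindW.integrable_exp_mul_add hIX hIY
  have hsub : {ω | Z₁ ω > a ∧ ρ * Z₁ ω + Real.sqrt (1 - ρ ^ 2) * Z₂ ω > b}
      ⊆ {ω | s * a + t * b ≤ (X' + Y') ω} := by
    intro ω hω
    obtain ⟨h1, h2⟩ := hω
    have e1 : s * a ≤ s * Z₁ ω := mul_le_mul_of_nonneg_left h1.le hs
    have e2 : t * b ≤ t * (ρ * Z₁ ω + Real.sqrt (1 - ρ ^ 2) * Z₂ ω) :=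
      mul_le_mul_of_nonneg_left h2.le ht
    show s * a + t * b ≤ u * Z₁ ω + v * Z₂ ω
    rw [hu_def, hv_def]
    nlinarith [e1, e2]
  have hmono : (μ {ω | Z₁ ω > a ∧ ρ * Z₁ ω + Real.sqrt (1 - ρ ^ 2) * Z₂ ω > b}).toReal
      ≤ (μ {ω | s * a + t * b ≤ (X' + Y') ω}).toReal :=
    ENNReal.toReal_mono (measure_ne_top _ _) (measure_mono hsub)
  have hcher := measure_ge_le_exp_mul_mgf (μ := μ) (X := X' + Y') (s * a + t * b)
    zero_le_one hIW
  have hmgf : mgf (X' + Y') μ 1 = Real.exp (u ^ 2 / 2) * Real.exp (v ^ 2 / 2) := by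
    rw [hindW.mgf_add hIX.aestronglyMeasurable hIY.aestronglyMeasurable]
    have h1 : mgf X' μ 1 = Real.exp (u ^ 2 / 2) := by
      unfold mgf
      simp only [hX'_def, one_mul]
      exact integral_exp_mul μ hm₁ hZ₁ u
    have h2 : mgf Y' μ 1 = Real.exp (v ^ 2 / 2) := by
      unfold mgf
      simp only [hY'_def, one_mul]
      exact integral_exp_mul μ hm₂ hZ₂ v
    rw [h1, h2]
  rw [hmgf] at hcher
  refine hmono.trans (hcher.trans (le_of_eq ?_))
  rw [← Real.exp_add, ← Real.exp_add]
  congr 1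
  have hv2 : v ^ 2 = t ^ 2 * (1 - ρ ^ 2) := by
    rw [hv_def, mul_pow, Real.sq_sqrt hd.le]
  rw [hv2, hu_def, hs_def, ht_def]
  field_simp
  ring

lemma box_lower (hm₁ : Measurable Z₁) (hm₂ : Measurable Z₂)
    (hind : IndepFun Z₁ Z₂ μ)
    (hZ₁ : ∀ x : ℝ, (μ {a | Z₁ a ≤ x}).toReal = stdNormalCDF x)
    (hZ₂ : ∀ x : ℝ, (μ {a | Z₂ a ≤ x}).toReal = stdNormalCDF x)
    {ρ : ℝ} (hρ1 : -1 < ρ) (hρ2 : ρ < 1) (a b : ℝ) :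
    (stdNormalCDF (a + 1) - stdNormalCDF a) *
      (1 - stdNormalCDF ((b - ρ * a + 1) / Real.sqrt (1 - ρ ^ 2)))
      ≤ (μ {ω | Z₁ ω > a ∧ ρ * Z₁ ω + Real.sqrt (1 - ρ ^ 2) * Z₂ ω > b}).toReal := by
  have hd : (0:ℝ) < 1 - ρ ^ 2 := by nlinarith
  have hr : (0:ℝ) < Real.sqrt (1 - ρ ^ 2) := Real.sqrt_pos.2 hd
  set c : ℝ := (b - ρ * a + 1) / Real.sqrt (1 - ρ ^ 2) with hc_def
  have hrc : Real.sqrt (1 - ρ ^ 2) * c = b - ρ * a + 1 := by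
    rw [hc_def, mul_div_cancel₀]
    exact hr.ne'
  have hsub : Z₁ ⁻¹' (Set.Ioc a (a + 1)) ∩ Z₂ ⁻¹' (Set.Ioi c)
      ⊆ {ω | Z₁ ω > a ∧ ρ * Z₁ ω + Real.sqrt (1 - ρ ^ 2) * Z₂ ω > b} := by
    rintro ω ⟨h1, h2⟩
    have hz1 : a < Z₁ ω ∧ Z₁ ω ≤ a + 1 := h1
    have hz2 : c < Z₂ ω := h2
    refine ⟨hz1.1, ?_⟩
    have e1 : Real.sqrt (1 - ρ ^ 2) * c < Real.sqrt (1 - ρ ^ 2) * Z₂ ω :=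
      mul_lt_mul_of_pos_left hz2 hr
    rw [hrc] at e1
    nlinarith [mul_nonneg (by linarith : (0:ℝ) ≤ 1 + ρ) (by linarith [hz1.1] : (0:ℝ) ≤ Z₁ ω - a)]
  have hmul := (indepFun_iff_measure_inter_preimage_eq_mul.1 hind)
    (Set.Ioc a (a + 1)) (Set.Ioi c) measurableSet_Ioc measurableSet_Ioi
  have hineq : μ (Z₁ ⁻¹' (Set.Ioc a (a + 1)) ∩ Z₂ ⁻¹' (Set.Ioi c))
      ≤ μ {ω | Z₁ ω > a ∧ ρ * Z₁ ω + Real.sqrt (1 - ρ ^ 2) * Z₂ ω > b} := measure_mono hsub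
  have h1 : (μ (Z₁ ⁻¹' (Set.Ioc a (a + 1)))).toReal = stdNormalCDF (a + 1) - stdNormalCDF a := by
    have hset : Z₁ ⁻¹' (Set.Ioc a (a + 1)) = Z₁ ⁻¹' (Set.Iic (a + 1)) \ Z₁ ⁻¹' (Set.Iic a) := by
      ext ω; simp only [Set.mem_preimage, Set.mem_Ioc, Set.mem_diff, Set.mem_Iic, not_le]; tauto
    rw [hset, measure_diff (Set.preimage_mono (Set.Iic_subset_Iic.2 (by linarith)))
      (hm₁ measurableSet_Iic).nullMeasurableSet (measure_ne_top μ _),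
      ENNReal.toReal_sub_of_le (measure_mono (Set.preimage_mono (Set.Iic_subset_Iic.2
        (by linarith)))) (measure_ne_top μ _)]
    rw [show (μ (Z₁ ⁻¹' Set.Iic (a+1))).toReal = stdNormalCDF (a+1) from hZ₁ (a+1),
      show (μ (Z₁ ⁻¹' Set.Iic a)).toReal = stdNormalCDF a from hZ₁ a]
  have h2 : (μ (Z₂ ⁻¹' (Set.Ioi c))).toReal = 1 - stdNormalCDF c := by
    have hset : Z₂ ⁻¹' (Set.Ioi c) = (Z₂ ⁻¹' (Set.Iic c))ᶜ := by
      rw [← Set.preimage_compl, Set.compl_Iic]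
    rw [hset, prob_compl_eq_one_sub (hm₂ measurableSet_Iic),
      ENNReal.toReal_sub_of_le prob_le_one ENNReal.one_ne_top, ENNReal.toReal_one,
      show (μ (Z₂ ⁻¹' Set.Iic c)).toReal = stdNormalCDF c from hZ₂ c]
  calc (stdNormalCDF (a + 1) - stdNormalCDF a) * (1 - stdNormalCDF c)
      = (μ (Z₁ ⁻¹' (Set.Ioc a (a + 1)) ∩ Z₂ ⁻¹' (Set.Ioi c))).toReal := by
        rw [hmul, ENNReal.toReal_mul, h1, h2]
    _ ≤ _ := ENNReal.toReal_mono (measure_ne_top _ _) hineq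

end BNaux

namespace BNaux

lemma tendsto_sqrt_comp {f : ℕ → ℝ} (hf : Tendsto f atTop atTop) :
    Tendsto (fun n => Real.sqrt (f n)) atTop atTop := by
  rw [tendsto_atTop]
  intro M
  filter_upwards [hf.eventually_ge_atTop (max M 0 ^ 2)] with n hn
  calc M ≤ max M 0 := le_max_left _ _
    _ = Real.sqrt (max M 0 ^ 2) := (Real.sqrt_sq (le_max_right _ _)).symm
    _ ≤ _ := Real.sqrt_le_sqrt hn

lemma rate {β : ℝ} (hβ : 0 < β) {x : ℕ → ℝ}
    (hx : ∀ n : ℕ, 2 ≤ n → stdNormalCDF (x n) = 1 - (n : ℝ) ^ (-β)) :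
    Tendsto x atTop atTop ∧
      Tendsto (fun n => x n / Real.sqrt (2 * Real.log n)) atTop (nhds (Real.sqrt β)) := by
  have hLpos : ∀ᶠ n : ℕ in atTop, 0 < Real.log n := by
    filter_upwards [eventually_ge_atTop 2] with n hn
    exact Real.log_pos (by exact_mod_cast hn)
  have hLtop : Tendsto (fun n : ℕ => Real.log n) atTop atTop :=
    Real.tendsto_log_atTop.comp tendsto_natCast_atTop_atTop
  have h2L : Tendsto (fun n : ℕ => 2 * Real.log n) atTop atTop :=
    hLtop.const_mul_atTop two_pos
  have hstop : Tendsto (fun n : ℕ => Real.sqrt (2 * Real.log n)) atTop atTop :=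
    tendsto_sqrt_comp h2L
  have hspos : ∀ᶠ n : ℕ in atTop, 0 < Real.sqrt (2 * Real.log n) :=
    hstop.eventually_gt_atTop 0
  have hrpow0 : Tendsto (fun n : ℕ => (n:ℝ) ^ (-β)) atTop (nhds 0) :=
    (tendsto_rpow_neg_atTop hβ).comp tendsto_natCast_atTop_atTop
  have hcdf0 : Tendsto (fun n : ℕ => 1 - stdNormalCDF (x n)) atTop (nhds 0) := by
    apply hrpow0.congr'
    filter_upwards [eventually_ge_atTop 2] with n hn
    rw [hx n hn]
    ring
  have hxtop : Tendsto x atTop atTop := tendsto_atTop_of_one_sub_cdf hcdf0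
  refine ⟨hxtop, ?_⟩
  have hub : ∀ᶠ n : ℕ in atTop, x n / Real.sqrt (2 * Real.log n) ≤ Real.sqrt β := by
    filter_upwards [eventually_ge_atTop 2, hxtop.eventually_ge_atTop 1, hLpos, hspos]
      with n hn hx1 hL hs
    have hn2 : (2:ℝ) ≤ (n:ℝ) := by exact_mod_cast hn
    have htail : (n:ℝ) ^ (-β) ≤ Real.exp (-(x n) ^ 2 / 2) := by
      have h := one_sub_cdf_le hx1
      rw [hx n hn] at h
      linarith
    have hlog : -β * Real.log n ≤ -(x n) ^ 2 / 2 := by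
      have h1 := Real.log_le_log (by positivity) htail
      rwa [Real.log_rpow (by linarith), Real.log_exp] at h1
    have hxle : x n ≤ Real.sqrt β * Real.sqrt (2 * Real.log n) := by
      rw [← Real.sqrt_mul hβ.le]
      exact (Real.le_sqrt (by linarith) (by positivity)).2 (by nlinarith)
    rw [div_le_iff₀ hs]
    linarith
  set g : ℕ → ℝ := fun n =>
    Real.sqrt (β - Real.log (2 * Real.pi) / (2 * Real.log n)) - 1 / Real.sqrt (2 * Real.log n)
    with hg
  have hglim : Tendsto g atTop (nhds (Real.sqrt β)) := by
    have h1 : Tendsto (fun n : ℕ => Real.log (2 * Real.pi) / (2 * Real.log n)) atTop (nhds 0) :=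
      tendsto_const_nhds.div_atTop h2L
    have h2 : Tendsto (fun n : ℕ => β - Real.log (2 * Real.pi) / (2 * Real.log n))
        atTop (nhds β) := by
      simpa using (tendsto_const_nhds (x := β) (f := atTop)).sub h1
    have h4 : Tendsto (fun n : ℕ => 1 / Real.sqrt (2 * Real.log n)) atTop (nhds 0) :=
      tendsto_const_nhds.div_atTop hstop
    simpa only [sub_zero] using h2.sqrt.sub h4
  have hbig : ∀ᶠ n : ℕ in atTop, Real.log (2 * Real.pi) ≤ 2 * β * Real.log n :=
    (hLtop.const_mul_atTop (by positivity : (0:ℝ) < 2 * β)).eventually_ge_atTop _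
  have hlb : ∀ᶠ n : ℕ in atTop, g n ≤ x n / Real.sqrt (2 * Real.log n) := by
    filter_upwards [eventually_ge_atTop 2, hxtop.eventually_ge_atTop 0, hLpos, hspos, hbig]
      with n hn hx0 hL hs hB
    have hn2 : (2:ℝ) ≤ (n:ℝ) := by exact_mod_cast hn
    have htail : (Real.sqrt (2 * Real.pi))⁻¹ * Real.exp (-(x n + 1) ^ 2 / 2) ≤ (n:ℝ) ^ (-β) := by
      have h := one_sub_cdf_ge (x n)
      rw [abs_of_nonneg hx0] at h
      rw [hx n hn] at h
      linarith
    have hpos : (0:ℝ) < (Real.sqrt (2 * Real.pi))⁻¹ * Real.exp (-(x n + 1) ^ 2 / 2) := by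
      have : (0:ℝ) < Real.sqrt (2 * Real.pi) := by positivity
      positivity
    have h1 := Real.log_le_log hpos htail
    rw [Real.log_mul (by positivity) (Real.exp_pos _).ne', Real.log_exp, Real.log_inv,
      Real.log_rpow (by linarith)] at h1
    have hlog2pi : Real.log (Real.sqrt (2 * Real.pi)) = Real.log (2 * Real.pi) / 2 :=
      Real.log_sqrt (by positivity)
    rw [hlog2pi] at h1
    have h2 : 2 * β * Real.log n - Real.log (2 * Real.pi) ≤ (x n + 1) ^ 2 := by linarith
    have h3 : Real.sqrt (2 * β * Real.log n - Real.log (2 * Real.pi)) ≤ x n + 1 := by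
      calc Real.sqrt (2 * β * Real.log n - Real.log (2 * Real.pi))
          ≤ Real.sqrt ((x n + 1) ^ 2) := Real.sqrt_le_sqrt h2
        _ = x n + 1 := Real.sqrt_sq (by linarith)
    have hA0 : 0 ≤ β - Real.log (2 * Real.pi) / (2 * Real.log n) := by
      rw [sub_nonneg, div_le_iff₀ (by linarith)]
      linarith
    have key : Real.sqrt (β - Real.log (2 * Real.pi) / (2 * Real.log n)) *
        Real.sqrt (2 * Real.log n) = Real.sqrt (2 * β * Real.log n - Real.log (2 * Real.pi)) := by
      rw [← Real.sqrt_mul hA0]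
      congr 1
      field_simp
    have h4 : Real.sqrt (β - Real.log (2 * Real.pi) / (2 * Real.log n))
        ≤ (x n + 1) / Real.sqrt (2 * Real.log n) := by
      rw [le_div_iff₀ hs, key]
      exact h3
    have h5 : (x n + 1) / Real.sqrt (2 * Real.log n)
        = x n / Real.sqrt (2 * Real.log n) + 1 / Real.sqrt (2 * Real.log n) := add_div _ _ _
    rw [hg]
    simp only
    rw [h5] at h4
    linarith
  exact tendsto_of_tendsto_of_tendsto_of_le_of_le' hglim tendsto_const_nhds hlb hub

end BNaux

/-- bivariate normal, interior regime: with `X = Z₁`,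
`Y = ρZ₁ + √(1-ρ²)Z₂`, `ρ ∈ (-1,1)`, and `Φ(x_β(n)) = 1 - n^{-β}`,
`Φ(x_γ(n)) = 1 - n^{-γ}`: if `ρ ≤ 0`, or `ρ > 0` and `ρ² < min{β/γ, γ/β}`, then
`−log P(X > x_β(n), Y > x_γ(n))/log n → (β + γ − 2ρ√(βγ))/(1 − ρ²)`. -/
theorem bivariate_normal_interior_regime
    {Ω : Type*} [MeasurableSpace Ω] (μ : Measure Ω) [IsProbabilityMeasure μ]
    (Z₁ Z₂ : Ω → ℝ) (hm₁ : Measurable Z₁) (hm₂ : Measurable Z₂)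
    (hind : IndepFun Z₁ Z₂ μ)
    (hZ₁ : ∀ x : ℝ, (μ {a | Z₁ a ≤ x}).toReal = stdNormalCDF x)
    (hZ₂ : ∀ x : ℝ, (μ {a | Z₂ a ≤ x}).toReal = stdNormalCDF x)
    (ρ : ℝ) (hρ : ρ ∈ Set.Ioo (-1:ℝ) 1)
    (β γ : ℝ) (hβ : 0 < β) (hγ : 0 < γ)
    (xβ xγ : ℕ → ℝ)
    (hxβ : ∀ n : ℕ, 2 ≤ n → stdNormalCDF (xβ n) = 1 - (n : ℝ) ^ (-β))
    (hxγ : ∀ n : ℕ, 2 ≤ n → stdNormalCDF (xγ n) = 1 - (n : ℝ) ^ (-γ))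
    (hregime : ρ ≤ 0 ∨ (0 < ρ ∧ ρ ^ 2 < min (β / γ) (γ / β))) :
    Tendsto
      (fun n : ℕ =>
        -Real.log (μ {a | Z₁ a > xβ n ∧
          ρ * Z₁ a + Real.sqrt (1 - ρ ^ 2) * Z₂ a > xγ n}).toReal / Real.log n)
      atTop (nhds ((β + γ - 2 * ρ * Real.sqrt (β * γ)) / (1 - ρ ^ 2))) := by
  obtain ⟨hρ1, hρ2⟩ := hρ
  have hd : (0:ℝ) < 1 - ρ ^ 2 := by nlinarith
  have hr : (0:ℝ) < Real.sqrt (1 - ρ ^ 2) := Real.sqrt_pos.2 hd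
  obtain ⟨haT, haB⟩ := BNaux.rate hβ hxβ
  obtain ⟨hbT, hbB⟩ := BNaux.rate hγ hxγ
  set s : ℕ → ℝ := fun n => Real.sqrt (2 * Real.log n) with hs_def
  have hLpos : ∀ᶠ n : ℕ in atTop, 0 < Real.log n := by
    filter_upwards [eventually_ge_atTop 2] with n hn
    exact Real.log_pos (by exact_mod_cast hn)
  have hLtop : Tendsto (fun n : ℕ => Real.log n) atTop atTop :=
    Real.tendsto_log_atTop.comp tendsto_natCast_atTop_atTop
  have h2L : Tendsto (fun n : ℕ => 2 * Real.log n) atTop atTop :=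
    hLtop.const_mul_atTop two_pos
  have hstop : Tendsto s atTop atTop := BNaux.tendsto_sqrt_comp h2L
  have hspos : ∀ᶠ n : ℕ in atTop, 0 < s n := hstop.eventually_gt_atTop 0
  have hinv : Tendsto (fun n : ℕ => 1 / s n) atTop (nhds 0) :=
    tendsto_const_nhds.div_atTop hstop
  -- positivity from the regime hypothesis
  have key1 : 0 < Real.sqrt β - ρ * Real.sqrt γ := by
    rcases hregime with h | ⟨hρpos, hlt⟩
    · have h1 : ρ * Real.sqrt γ ≤ 0 := mul_nonpos_of_nonpos_of_nonneg h (Real.sqrt_nonneg _)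
      have h2 : 0 < Real.sqrt β := Real.sqrt_pos.2 hβ
      linarith
    · have h1 : ρ ^ 2 < β / γ := lt_of_lt_of_le hlt (min_le_left _ _)
      have h2 : (ρ * Real.sqrt γ) ^ 2 < Real.sqrt β ^ 2 := by
        rw [mul_pow, Real.sq_sqrt hγ.le, Real.sq_sqrt hβ.le]
        exact (lt_div_iff₀ hγ).1 h1
      have h3 : 0 ≤ ρ * Real.sqrt γ := mul_nonneg hρpos.le (Real.sqrt_nonneg _)
      nlinarith [Real.sqrt_nonneg β]
  have key2 : 0 < Real.sqrt γ - ρ * Real.sqrt β := by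
    rcases hregime with h | ⟨hρpos, hlt⟩
    · have h1 : ρ * Real.sqrt β ≤ 0 := mul_nonpos_of_nonpos_of_nonneg h (Real.sqrt_nonneg _)
      have h2 : 0 < Real.sqrt γ := Real.sqrt_pos.2 hγ
      linarith
    · have h1 : ρ ^ 2 < γ / β := lt_of_lt_of_le hlt (min_le_right _ _)
      have h2 : (ρ * Real.sqrt β) ^ 2 < Real.sqrt γ ^ 2 := by
        rw [mul_pow, Real.sq_sqrt hγ.le, Real.sq_sqrt hβ.le]
        exact (lt_div_iff₀ hβ).1 h1
      have h3 : 0 ≤ ρ * Real.sqrt β := mul_nonneg hρpos.le (Real.sqrt_nonneg _)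
      nlinarith [Real.sqrt_nonneg γ]
  -- eventual comparisons
  have hev1 : ∀ᶠ n : ℕ in atTop, ρ * xγ n ≤ xβ n := by
    have h := haB.sub (hbB.const_mul ρ)
    filter_upwards [(tendsto_order.1 h).1 0 (by simpa using key1), hspos] with n h1 h2
    have h3 : 0 < (xβ n - ρ * xγ n) / s n := by
      rw [sub_div, mul_div_assoc]
      exact h1
    have h4 : 0 < xβ n - ρ * xγ n := by
      by_contra hcon
      push_neg at hcon
      linarith [div_nonpos_of_nonpos_of_nonneg hcon h2.le]
    linarith
  have hev2 : ∀ᶠ n : ℕ in atTop, ρ * xβ n ≤ xγ n := by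
    have h := hbB.sub (haB.const_mul ρ)
    filter_upwards [(tendsto_order.1 h).1 0 (by simpa using key2), hspos] with n h1 h2
    have h3 : 0 < (xγ n - ρ * xβ n) / s n := by
      rw [sub_div, mul_div_assoc]
      exact h1
    have h4 : 0 < xγ n - ρ * xβ n := by
      by_contra hcon
      push_neg at hcon
      linarith [div_nonpos_of_nonpos_of_nonneg hcon h2.le]
    linarith
  set c : ℕ → ℝ := fun n => (xγ n - ρ * xβ n + 1) / Real.sqrt (1 - ρ ^ 2) with hc_def
  set qq : ℕ → ℝ := fun n =>
    (xβ n ^ 2 + xγ n ^ 2 - 2 * ρ * (xβ n * xγ n)) / (2 * (1 - ρ ^ 2)) with hqq_def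
  set rr : ℕ → ℝ := fun n =>
    Real.log (2 * Real.pi) + (xβ n + 1) ^ 2 / 2 + (c n + 1) ^ 2 / 2 with hrr_def
  -- limit of qq / log n
  have hQlim : Tendsto (fun n => qq n / Real.log n) atTop
      (nhds ((β + γ - 2 * ρ * Real.sqrt (β * γ)) / (1 - ρ ^ 2))) := by
    have hnice : Tendsto (fun n => ((xβ n / s n) ^ 2 + (xγ n / s n) ^ 2
          - 2 * ρ * ((xβ n / s n) * (xγ n / s n))) / (1 - ρ ^ 2)) atTop
        (nhds ((Real.sqrt β ^ 2 + Real.sqrt γ ^ 2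
          - 2 * ρ * (Real.sqrt β * Real.sqrt γ)) / (1 - ρ ^ 2))) :=
      (((haB.pow 2).add (hbB.pow 2)).sub ((haB.mul hbB).const_mul (2 * ρ))).div_const _
    have hTeq : (Real.sqrt β ^ 2 + Real.sqrt γ ^ 2
        - 2 * ρ * (Real.sqrt β * Real.sqrt γ)) / (1 - ρ ^ 2)
        = (β + γ - 2 * ρ * Real.sqrt (β * γ)) / (1 - ρ ^ 2) := by
      rw [Real.sq_sqrt hβ.le, Real.sq_sqrt hγ.le, ← Real.sqrt_mul hβ.le]
    rw [hTeq] at hnice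
    apply hnice.congr'
    filter_upwards [hLpos, hspos] with n hL hs
    have hs2 : s n ^ 2 = 2 * Real.log n := Real.sq_sqrt (by positivity)
    have hss : s n * s n = 2 * Real.log n := by rw [← pow_two]; exact hs2
    rw [div_pow, div_pow, div_mul_div_comm, hs2, hss, hqq_def]
    simp only
    rw [← mul_div_assoc, ← add_div, div_sub_div_same, div_div, div_div,
      show 2 * Real.log n * (1 - ρ ^ 2) = 2 * (1 - ρ ^ 2) * Real.log n by ring]
  -- limit of rr / log n
  have hRlim : Tendsto (fun n => rr n / Real.log n) atTop
      (nhds ((β + γ - 2 * ρ * Real.sqrt (β * γ)) / (1 - ρ ^ 2))) := by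
    have t1 : Tendsto (fun n : ℕ => Real.log (2 * Real.pi) / Real.log n) atTop (nhds 0) :=
      tendsto_const_nhds.div_atTop hLtop
    have t2 : Tendsto (fun n => (xβ n / s n + 1 / s n) ^ 2) atTop
        (nhds ((Real.sqrt β + 0) ^ 2)) := (haB.add hinv).pow 2
    have t3base : Tendsto (fun n => ((xγ n / s n - ρ * (xβ n / s n) + 1 / s n)
          / Real.sqrt (1 - ρ ^ 2) + 1 / s n) ^ 2) atTop
        (nhds (((Real.sqrt γ - ρ * Real.sqrt β + 0) / Real.sqrt (1 - ρ ^ 2) + 0) ^ 2)) :=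
      ((((hbB.sub (haB.const_mul ρ)).add hinv).div_const _).add hinv).pow 2
    have hsum := (t1.add t2).add t3base
    have hval : (0 + (Real.sqrt β + 0) ^ 2
        + ((Real.sqrt γ - ρ * Real.sqrt β + 0) / Real.sqrt (1 - ρ ^ 2) + 0) ^ 2)
        = (β + γ - 2 * ρ * Real.sqrt (β * γ)) / (1 - ρ ^ 2) := by
      have hB : Real.sqrt β ^ 2 = β := Real.sq_sqrt hβ.le
      have hG : Real.sqrt γ ^ 2 = γ := Real.sq_sqrt hγ.le
      have hR : Real.sqrt (1 - ρ ^ 2) ^ 2 = 1 - ρ ^ 2 := Real.sq_sqrt hd.le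
      have hBG : Real.sqrt (β * γ) = Real.sqrt β * Real.sqrt γ := Real.sqrt_mul hβ.le γ
      rw [hBG, ← hB, ← hG, ← hR]
      have hRne : Real.sqrt (1 - ρ ^ 2) ≠ 0 := hr.ne'
      field_simp
      rw [Real.sqrt_sq (Real.sqrt_nonneg _), Real.sqrt_sq (Real.sqrt_nonneg _), Real.sqrt_sq (Real.sqrt_nonneg _)]
      linear_combination (Real.sqrt (1 - ρ ^ 2) ^ 2 * Real.sqrt β ^ 2) * hR
    rw [hval] at hsum
    apply hsum.congr'
    filter_upwards [hLpos, hspos] with n hL hs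
    have hs2 : s n ^ 2 = 2 * Real.log n := Real.sq_sqrt (by positivity)
    have e1 : xβ n / s n + 1 / s n = (xβ n + 1) / s n := (add_div _ _ _).symm
    have e2 : (xγ n / s n - ρ * (xβ n / s n) + 1 / s n) / Real.sqrt (1 - ρ ^ 2) + 1 / s n
        = (c n + 1) / s n := by
      rw [hc_def]
      field_simp
    rw [e1, e2, div_pow, div_pow, hs2, hrr_def]
    field_simp
  -- squeeze
  apply tendsto_of_tendsto_of_tendsto_of_le_of_le' hQlim hRlim
  · -- lower bound: Chernoff
    filter_upwards [hev1, hev2, hLpos] with n h1 h2 hL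
    have hch := BNaux.chernoff (μ := μ) hm₁ hm₂ hind hZ₁ hZ₂ hρ1 hρ2 h1 h2
    have hbl := BNaux.box_lower (μ := μ) hm₁ hm₂ hind hZ₁ hZ₂ hρ1 hρ2 (xβ n) (xγ n)
    have f1 : 0 < stdNormalCDF (xβ n + 1) - stdNormalCDF (xβ n) := by
      have := BNaux.cdf_gap_ge (xβ n)
      have hp : (0:ℝ) < (Real.sqrt (2 * Real.pi))⁻¹
          * Real.exp (-(|xβ n| + 1) ^ 2 / 2) := by
        have : (0:ℝ) < Real.sqrt (2 * Real.pi) := by positivity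
        positivity
      linarith
    have f2 : 0 < 1 - stdNormalCDF ((xγ n - ρ * xβ n + 1) / Real.sqrt (1 - ρ ^ 2)) := by
      linarith [BNaux.cdf_lt_one ((xγ n - ρ * xβ n + 1) / Real.sqrt (1 - ρ ^ 2))]
    have hPpos : 0 < (μ {a | Z₁ a > xβ n ∧
        ρ * Z₁ a + Real.sqrt (1 - ρ ^ 2) * Z₂ a > xγ n}).toReal :=
      lt_of_lt_of_le (mul_pos f1 f2) hbl
    have hlogP : Real.log ((μ {a | Z₁ a > xβ n ∧
        ρ * Z₁ a + Real.sqrt (1 - ρ ^ 2) * Z₂ a > xγ n}).toReal)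
        ≤ -((xβ n ^ 2 + xγ n ^ 2 - 2 * ρ * xβ n * xγ n) / (2 * (1 - ρ ^ 2))) := by
      have := Real.log_le_log hPpos hch
      rwa [Real.log_exp] at this
    have hqle : qq n ≤ -Real.log ((μ {a | Z₁ a > xβ n ∧
        ρ * Z₁ a + Real.sqrt (1 - ρ ^ 2) * Z₂ a > xγ n}).toReal) := by
      rw [hqq_def]
      simp only
      have heq : (xβ n ^ 2 + xγ n ^ 2 - 2 * ρ * (xβ n * xγ n)) / (2 * (1 - ρ ^ 2))
          = (xβ n ^ 2 + xγ n ^ 2 - 2 * ρ * xβ n * xγ n) / (2 * (1 - ρ ^ 2)) := by ring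
      rw [heq]
      linarith [hlogP]
    exact div_le_div_of_nonneg_right hqle hL.le |>.trans_eq rfl
  · -- upper bound: box
    filter_upwards [hev2, haT.eventually_ge_atTop 0, hLpos] with n h2 ha0 hL
    have hc0 : 0 ≤ c n := by
      rw [hc_def]
      exact div_nonneg (by linarith) hr.le
    have hbl := BNaux.box_lower (μ := μ) hm₁ hm₂ hind hZ₁ hZ₂ hρ1 hρ2 (xβ n) (xγ n)
    have f1 : (Real.sqrt (2 * Real.pi))⁻¹ * Real.exp (-(xβ n + 1) ^ 2 / 2)
        ≤ stdNormalCDF (xβ n + 1) - stdNormalCDF (xβ n) := by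
      have := BNaux.cdf_gap_ge (xβ n)
      rwa [abs_of_nonneg ha0] at this
    have f2 : (Real.sqrt (2 * Real.pi))⁻¹ * Real.exp (-(c n + 1) ^ 2 / 2)
        ≤ 1 - stdNormalCDF ((xγ n - ρ * xβ n + 1) / Real.sqrt (1 - ρ ^ 2)) := by
      have := BNaux.one_sub_cdf_ge (c n)
      rwa [abs_of_nonneg hc0] at this
    have hsp : (0:ℝ) < Real.sqrt (2 * Real.pi) := by positivity
    have hLB : (2 * Real.pi)⁻¹ * Real.exp (-(xβ n + 1) ^ 2 / 2 - (c n + 1) ^ 2 / 2)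
        ≤ (μ {a | Z₁ a > xβ n ∧
          ρ * Z₁ a + Real.sqrt (1 - ρ ^ 2) * Z₂ a > xγ n}).toReal := by
      have hmul : ((Real.sqrt (2 * Real.pi))⁻¹ * Real.exp (-(xβ n + 1) ^ 2 / 2))
          * ((Real.sqrt (2 * Real.pi))⁻¹ * Real.exp (-(c n + 1) ^ 2 / 2))
          = (2 * Real.pi)⁻¹ * Real.exp (-(xβ n + 1) ^ 2 / 2 - (c n + 1) ^ 2 / 2) := by
        rw [show ((Real.sqrt (2 * Real.pi))⁻¹ * Real.exp (-(xβ n + 1) ^ 2 / 2))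
          * ((Real.sqrt (2 * Real.pi))⁻¹ * Real.exp (-(c n + 1) ^ 2 / 2))
          = ((Real.sqrt (2 * Real.pi))⁻¹ * (Real.sqrt (2 * Real.pi))⁻¹)
            * (Real.exp (-(xβ n + 1) ^ 2 / 2) * Real.exp (-(c n + 1) ^ 2 / 2)) by ring,
          ← mul_inv, Real.mul_self_sqrt (by positivity), ← Real.exp_add]
        congr 2
        ring
      rw [← hmul]
      refine le_trans (mul_le_mul f1 f2 (by positivity) ?_) hbl
      have := BNaux.cdf_gap_ge (xβ n)
      have hp : (0:ℝ) ≤ (Real.sqrt (2 * Real.pi))⁻¹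
          * Real.exp (-(|xβ n| + 1) ^ 2 / 2) := by positivity
      linarith
    have hLBpos : (0:ℝ) < (2 * Real.pi)⁻¹
        * Real.exp (-(xβ n + 1) ^ 2 / 2 - (c n + 1) ^ 2 / 2) := by positivity
    have hlog := Real.log_le_log hLBpos hLB
    rw [Real.log_mul (by positivity) (Real.exp_pos _).ne', Real.log_exp,
      Real.log_inv] at hlog
    have hle : -Real.log ((μ {a | Z₁ a > xβ n ∧
        ρ * Z₁ a + Real.sqrt (1 - ρ ^ 2) * Z₂ a > xγ n}).toReal) ≤ rr n := by
      rw [hrr_def]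
      simp only
      linarith
    exact (div_le_div_of_nonneg_right hle hL.le).trans_eq rfl
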